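/- arXiv:1310.1323 — 6 statements merged into one kernel-verified Lean document; each statement's English description precedes it below -/
import Mathlib

section
/- Suppose that for every positive integer n, every sequence of n consecutive integers all strictly between n² and (n+1)² contains at least one prime. Then for any two consecutive primes p < q with p > 2, there are at least four primes strictly between p² and q². -/
theorem stmt_3
    (conj : ∀ n a : ℕ, 0 < n → n ^ 2 < a → a + n - 1 < (n + 1) ^ 2 →
      ∃ p, Nat.Prime p ∧ a ≤ p ∧ p ≤ a + n - 1)
    (p q : ℕ) (hp : Nat.Prime p) (hq : Nat.Prime q) (h2 : 2 < p) (hpq : p < q)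
    (hcons : ∀ r, Nat.Prime r → p < r → r < q → False) :
    4 ≤ ((Finset.Ioo (p ^ 2) (q ^ 2)).filter Nat.Prime).card := by
  -- q ≥ p + 2 since p+1 is even and > 2
  have hq2 : p + 2 ≤ q := by
    rcases Nat.lt_or_ge q (p + 2) with h | h
    · have : q = p + 1 := by omega
      subst this
      have : 2 ∣ p + 1 := by
        obtain ⟨k, hk⟩ := hp.odd_of_ne_two (by omega)
        exact ⟨k + 1, by omega⟩
      have := (Nat.Prime.eq_one_or_self_of_dvd hq 2 this)
      omega
    · exact h
  have hp0 : 0 < p := by omega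
  have e1 : (p + 1) ^ 2 = p ^ 2 + 2 * p + 1 := by ring
  have e2 : (p + 2) ^ 2 = p ^ 2 + 4 * p + 4 := by ring
  have e3 : (p + 1 + 1) ^ 2 = p ^ 2 + 4 * p + 4 := by ring
  obtain ⟨r1, hr1p, hr1a, hr1b⟩ := conj p (p ^ 2 + 1) hp0 (by omega) (by omega)
  obtain ⟨r2, hr2p, hr2a, hr2b⟩ := conj p (p ^ 2 + p + 1) hp0 (by omega) (by omega)
  obtain ⟨r3, hr3p, hr3a, hr3b⟩ :=
    conj (p + 1) ((p + 1) ^ 2 + 1) (by omega) (by omega) (by omega)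
  obtain ⟨r4, hr4p, hr4a, hr4b⟩ :=
    conj (p + 1) ((p + 1) ^ 2 + (p + 1) + 1) (by omega) (by omega) (by omega)
  have hsq : (p + 2) ^ 2 ≤ q ^ 2 := Nat.pow_le_pow_left (by omega) 2
  have hsub : ({r1, r2, r3, r4} : Finset ℕ) ⊆
      (Finset.Ioo (p ^ 2) (q ^ 2)).filter Nat.Prime := by
    intro x hx
    simp only [Finset.mem_insert, Finset.mem_singleton] at hx
    simp only [Finset.mem_filter, Finset.mem_Ioo]
    rcases hx with rfl | rfl | rfl | rfl
    · exact ⟨⟨by omega, by omega⟩, hr1p⟩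
    · exact ⟨⟨by omega, by omega⟩, hr2p⟩
    · exact ⟨⟨by omega, by omega⟩, hr3p⟩
    · exact ⟨⟨by omega, by omega⟩, hr4p⟩
  have hcard : ({r1, r2, r3, r4} : Finset ℕ).card = 4 := by
    have h12 : r1 ≠ r2 := by omega
    have h13 : r1 ≠ r3 := by omega
    have h14 : r1 ≠ r4 := by omega
    have h23 : r2 ≠ r3 := by omega
    have h24 : r2 ≠ r4 := by omega
    have h34 : r3 ≠ r4 := by omega
    simp [Finset.card_insert_of_notMem, h12, h13, h14, h23, h24, h34]
  calc 4 = ({r1, r2, r3, r4} : Finset ℕ).card := hcard.symm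
    _ ≤ _ := Finset.card_le_card hsub
end

section
/- Suppose that for every positive integer n, every sequence of n consecutive integers all strictly between n² and (n+1)² contains at least one prime. Then Andrica's conjecture holds: for any two consecutive primes p < q, √q − √p < 1. -/
theorem stmt_5
    (conj : ∀ n a : ℕ, 0 < n → n ^ 2 < a → a + n - 1 < (n + 1) ^ 2 →
      ∃ p, Nat.Prime p ∧ a ≤ p ∧ p ≤ a + n - 1) :
    ∀ p q : ℕ, Nat.Prime p → Nat.Prime q → p < q →
      (∀ r, Nat.Prime r → p < r → r < q → False) →
      Real.sqrt q - Real.sqrt p < 1 := by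
  intro p q hp hq hpq hno
  by_contra h
  push_neg at h
  set n := Nat.sqrt p with hn
  have hp2 : 2 ≤ p := hp.two_le
  have hn1 : 1 ≤ n := by
    have := Nat.sqrt_le_sqrt (show 1 ≤ p by omega)
    simpa using this
  have hn2 : n ^ 2 ≤ p := Nat.sqrt_le' p
  have hn3 : p < (n + 1) ^ 2 := Nat.lt_succ_sqrt' p
  have hsqq : Real.sqrt q ^ 2 = (q : ℝ) := Real.sq_sqrt (by positivity)
  have hsqp : Real.sqrt p ^ 2 = (p : ℝ) := Real.sq_sqrt (by positivity)
  have hqp : (p : ℝ) + 2 * Real.sqrt p + 1 ≤ q := by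
    nlinarith [Real.sqrt_nonneg (p : ℝ), Real.sqrt_nonneg (q : ℝ)]
  have hsp : (n : ℝ) ≤ Real.sqrt p := by
    have : ((n : ℝ)) = Real.sqrt ((n : ℝ) ^ 2) := by
      rw [Real.sqrt_sq (by positivity)]
    rw [this]
    apply Real.sqrt_le_sqrt
    exact_mod_cast hn2
  have hq1 : p + 2 * n + 1 ≤ q := by
    have : ((p + 2 * n + 1 : ℕ) : ℝ) ≤ (q : ℝ) := by push_cast; linarith
    exact_mod_cast this
  by_cases hc : p + n < (n + 1) ^ 2
  · obtain ⟨r, hr, h1, h2⟩ := conj n (p + 1) hn1 (by omega) (by omega)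
    exact hno r hr (by omega) (by omega)
  · -- p + n ≥ (n+1)^2, so p ≥ n^2 + n + 1 > n^2
    have hpn : n ^ 2 + n + 1 ≤ p := by nlinarith
    have hsp' : (n : ℝ) < Real.sqrt p := by
      nlinarith [Real.sqrt_nonneg (p : ℝ),
        (show ((n : ℝ)) ^ 2 < (p : ℝ) by exact_mod_cast (show n ^ 2 < p by omega))]
    have hq2 : p + 2 * n + 2 ≤ q := by
      have : ((p + 2 * n + 1 : ℕ) : ℝ) < (q : ℝ) := by push_cast; linarith
      have := (Nat.cast_lt (α := ℝ)).mp this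
      omega
    obtain ⟨r, hr, h1, h2⟩ := conj (n + 1) ((n + 1) ^ 2 + 1) (by omega) (by omega)
      (by have e : (n + 1 + 1) ^ 2 = (n + 1) ^ 2 + 2 * n + 3 := by ring
          omega)
    refine hno r hr (by omega) ?_
    have : (n + 1) ^ 2 = n ^ 2 + 2 * n + 1 := by ring
    omega
end

section
/- Suppose that for every positive integer n, every sequence of n consecutive integers all strictly between n² and (n+1)² contains at least one prime. Then for every positive integer n, the interval [n, n + 2⌊√n⌋ − 1] contains at least one prime. -/
theorem stmt_12
    (conj : ∀ n a : ℕ, 0 < n → n ^ 2 < a → a + n - 1 < (n + 1) ^ 2 →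
      ∃ p, Nat.Prime p ∧ a ≤ p ∧ p ≤ a + n - 1) :
    ∀ n : ℕ, 0 < n → ∃ p, Nat.Prime p ∧ n ≤ p ∧ p ≤ n + 2 * Nat.sqrt n - 1 := by
  intro n hn
  set s := Nat.sqrt n with hs
  have hs1 : 1 ≤ s := Nat.sqrt_pos.mpr hn
  have hls : s * s ≤ n := by have h := Nat.sqrt_le' n; rw [sq] at h; exact h
  have hus : n < s * s + 2 * s + 1 := by
    have h := Nat.lt_succ_sqrt n; nlinarith
  have e1 : (s + 1) ^ 2 = s * s + 2 * s + 1 := by ring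
  have e2 : (s + 2) ^ 2 = s * s + 4 * s + 4 := by ring
  have e0 : s ^ 2 = s * s := sq s
  by_cases h2 : s * s < n
  · by_cases h1 : n ≤ s * s + s + 1
    · obtain ⟨p, hp, hpl, hpu⟩ := conj s n hs1 (by rw [e0]; omega) (by rw [e1]; omega)
      exact ⟨p, hp, hpl, by omega⟩
    · obtain ⟨p, hp, hpl, hpu⟩ := conj (s + 1) (s * s + 2 * s + 2) (by omega)
        (by rw [e1]; omega) (by rw [e2]; omega)
      refine ⟨p, hp, by omega, ?_⟩
      rcases Nat.lt_or_ge p (s * s + 3 * s + 2) with h | h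
      · omega
      · exfalso
        have e3 : (s + 1) * (s + 2) = s * s + 3 * s + 2 := by ring
        have hpe : p = (s + 1) * (s + 2) := by omega
        have hdvd : (s + 1) ∣ p := ⟨s + 2, hpe⟩
        rcases (Nat.Prime.eq_one_or_self_of_dvd hp (s + 1) hdvd) with h' | h'
        · omega
        · have e3 : (s + 1) * (s + 2) = s * s + 3 * s + 2 := by ring
          omega
  · -- n = s * s
    obtain ⟨p, hp, hpl, hpu⟩ := conj s (s * s + 1) hs1 (by rw [e0]; omega)
      (by rw [e1]; omega)
    exact ⟨p, hp, by omega, by omega⟩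
end

section
/- Suppose that for every positive integer n, every sequence of n consecutive integers all strictly between n² and (n+1)² contains at least one prime. Then for every integer n > 1, at least one of the intervals [n − ⌊√n⌋ + 1, n] and [n, n + ⌊√n⌋ − 1] contains a prime. -/
theorem stmt_14
    (conj : ∀ n a : ℕ, 0 < n → n ^ 2 < a → a + n - 1 < (n + 1) ^ 2 →
      ∃ p, Nat.Prime p ∧ a ≤ p ∧ p ≤ a + n - 1) :
    ∀ n : ℕ, 1 < n →
      (∃ p, Nat.Prime p ∧ n - Nat.sqrt n + 1 ≤ p ∧ p ≤ n) ∨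
      (∃ p, Nat.Prime p ∧ n ≤ p ∧ p ≤ n + Nat.sqrt n - 1) := by
  intro n hn
  obtain ⟨s, hs⟩ : ∃ s, s = Nat.sqrt n := ⟨_, rfl⟩
  obtain ⟨q, hq⟩ : ∃ q, s ^ 2 = q := ⟨_, rfl⟩
  obtain ⟨r, hr⟩ : ∃ r, (s + 1) ^ 2 = r := ⟨_, rfl⟩
  have hrel : r = q + 2 * s + 1 := by rw [← hq, ← hr]; ring
  have hA : q ≤ n := by rw [← hq, hs]; exact Nat.sqrt_le' n
  have hB : n < r := by rw [← hr, hs]; exact Nat.lt_succ_sqrt' n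
  have hs1 : 1 ≤ s := by
    rcases Nat.eq_zero_or_pos s with h | h
    · subst h; simp at hq; omega
    · exact h
  have hsn : s ≤ n := by rw [hs]; exact Nat.sqrt_le_self n
  rcases lt_trichotomy n (q + s) with hcase | hcase | hcase
  · -- q ≤ n < q + s
    rcases Nat.lt_or_ge q n with hqc | hqc
    · -- q < n < q + s : right interval [n, n + s - 1]
      right
      obtain ⟨p, hp, hp1, hp2⟩ := conj s n hs1 (by rw [hq]; omega) (by rw [hr]; omega)
      exact ⟨p, hp, hp1, by rw [← hs]; omega⟩
    · -- n = q : use interval [n - s + 1, n - 1] of length s - 1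
      have hnq : n = q := by omega
      have hs2 : 2 ≤ s := by
        by_contra h
        push_neg at h
        have : q ≤ 1 := by rw [← hq]; nlinarith
        omega
      obtain ⟨u, hu⟩ : ∃ u, s = u + 1 := ⟨s - 1, by omega⟩
      obtain ⟨w, hw⟩ : ∃ w, u ^ 2 = w := ⟨_, rfl⟩
      have hrel2 : q = w + 2 * u + 1 := by rw [← hq, hu, ← hw]; ring
      have huq : (u + 1) ^ 2 = q := by rw [← hq, hu]
      left
      obtain ⟨p, hp, hp1, hp2⟩ := conj u (n - u) (by omega)
        (by rw [hw]; omega) (by rw [huq]; omega)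
      exact ⟨p, hp, by rw [← hs]; omega, by omega⟩
  · -- n = q + s : right interval works?  q < n, n + s - 1 = q + 2s - 1 < r ✓
    right
    obtain ⟨p, hp, hp1, hp2⟩ := conj s n hs1 (by rw [hq]; omega) (by rw [hr]; omega)
    exact ⟨p, hp, hp1, by rw [← hs]; omega⟩
  · -- n > q + s : left interval [n - s + 1, n]
    left
    obtain ⟨p, hp, hp1, hp2⟩ := conj s (n - s + 1) hs1 (by rw [hq]; omega)
      (by rw [hr]; omega)
    exact ⟨p, hp, by rw [← hs]; omega, by omega⟩
end

section
/- For every positive integer n, if a is an integer with n² < a ≤ n² + n + 1, then a + ⌊√a⌋ − 1 ≤ n² + 3n, and if moreover the interval [n² + n + 1, n² + 3n] together with Legendre's-type coverage from Conjecture 1 gives a prime in [a, a + n − 1] whenever it fits below (n+1)², then assuming Conjecture 1 there is a prime in [a, a + ⌊√a⌋ − 1]. -/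
theorem stmt_16
    (conj : ∀ n a : ℕ, 0 < n → n ^ 2 < a → a + n - 1 < (n + 1) ^ 2 →
      ∃ p, Nat.Prime p ∧ a ≤ p ∧ p ≤ a + n - 1) :
    ∀ n a : ℕ, 0 < n → n ^ 2 < a → a ≤ n ^ 2 + n + 1 →
      ∃ p, Nat.Prime p ∧ a ≤ p ∧ p ≤ a + Nat.sqrt a - 1 := by
  intro n a hn h1 h2
  have hsq : Nat.sqrt a = n := by
    have h3 : a < (n + 1) ^ 2 := by nlinarith
    have := Nat.sqrt_lt'.mpr (by simpa [pow_two] using h3)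
    have := Nat.sqrt_le_sqrt (Nat.le_of_lt (show n * n < a by nlinarith))
    rw [show n * n = n ^ 2 by ring, Nat.sqrt_eq'] at this
    omega
  rw [hsq]
  refine conj n a hn h1 ?_
  have : (n + 1) ^ 2 = n ^ 2 + 2 * n + 1 := by ring
  omega
end

section
/- Suppose that for every positive integer n, every sequence of n consecutive integers all strictly between n² and (n+1)² contains at least one prime. Then for every perfect square a = n² with n ≥ 1, the interval [a, a + ⌊√a⌋] contains at least one prime. -/
theorem stmt_17
    (conj : ∀ n a : ℕ, 0 < n → n ^ 2 < a → a + n - 1 < (n + 1) ^ 2 →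
      ∃ p, Nat.Prime p ∧ a ≤ p ∧ p ≤ a + n - 1) :
    ∀ n : ℕ, 1 ≤ n → ∃ p, Nat.Prime p ∧ n ^ 2 ≤ p ∧ p ≤ n ^ 2 + Nat.sqrt (n ^ 2) := by
  intro n hn
  have hlt : n ^ 2 + 1 + n - 1 < (n + 1) ^ 2 := by
    have h : n ^ 2 + 1 + n - 1 = n ^ 2 + n := by omega
    rw [h]; nlinarith
  obtain ⟨p, hp, h1, h2⟩ := conj n (n ^ 2 + 1) hn (by omega) hlt
  exact ⟨p, hp, by omega, by rw [Nat.sqrt_eq']; omega⟩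
end
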